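/- Let K ≥ 1, let S ⊆ ℝ^K be an open path-connected set, and let C > 2. Let c₀ ∈ S have all coordinates nonzero, let β ∈ S, and let η > 0 be small enough that the open Euclidean ball B_η(β) is contained in S. Then there exist a natural number m₀ and points c₀, c₁, …, c_{m₀+1}, all belonging to S, such that for every m ∈ {0, …, m₀} and every coordinate k ∈ {1, …, K} one has |c_{m+1}^k − c_m^k| ≤ C·|c_m^k|, and such that c_{m₀+1} ∈ B_η(β). (This is the deterministic reachability core of Proposition 1: under the componentwise control |α^k − c^k| ≤ C|c^k| with C > 2, any target ball inside S can be reached from any starting center in finitely many steps.) -/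

import Mathlib

open Metric

noncomputable def sg (x : ℝ) : ℝ := if x < 0 then -1 else 1

lemma sg_mul_abs (x : ℝ) : sg x * |x| = x := by
  unfold sg; split_ifs with h
  · rw [abs_of_neg h]; ring
  · rw [abs_of_nonneg (not_lt.1 h)]; ring

lemma abs_sg (x : ℝ) : |sg x| = 1 := by unfold sg; split_ifs <;> simp

lemma abs_add_mul_sg (x t : ℝ) (ht : 0 ≤ t) : |x + t * sg x| = |x| + t := by
  have h : x + t * sg x = sg x * (|x| + t) := by
    rw [mul_add, sg_mul_abs]; ring
  rw [h, abs_mul, abs_sg, one_mul, abs_of_nonneg (by positivity)]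

lemma coord_le_dist {K : ℕ} (v w : EuclideanSpace ℝ (Fin K)) (k : Fin K) :
    |v k - w k| ≤ dist v w := by
  rw [EuclideanSpace.dist_eq]
  have h1 : |v k - w k| = Real.sqrt (dist (v k) (w k) ^ 2) := by
    rw [Real.dist_eq, Real.sqrt_sq_eq_abs, abs_abs]
  rw [h1]
  exact Real.sqrt_le_sqrt (Finset.single_le_sum
    (f := fun i => dist (v i) (w i) ^ 2) (fun i _ => sq_nonneg _) (Finset.mem_univ k))

lemma dist_le_of_coords {K : ℕ} (v w : EuclideanSpace ℝ (Fin K)) (b : ℝ) (hb : 0 ≤ b)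
    (h : ∀ k, |v k - w k| ≤ b) : dist v w ≤ Real.sqrt K * b := by
  rw [EuclideanSpace.dist_eq]
  have hsum : ∑ i, dist (v i) (w i) ^ 2 ≤ ∑ _i : Fin K, b ^ 2 := by
    refine Finset.sum_le_sum fun i _ => ?_
    have hi := h i
    rw [Real.dist_eq]
    nlinarith [abs_nonneg (v i - w i), sq_abs (v i - w i)]
  calc Real.sqrt (∑ i, dist (v i) (w i) ^ 2) ≤ Real.sqrt (K * b ^ 2) := by
        apply Real.sqrt_le_sqrt; simpa using hsum
    _ = Real.sqrt K * b := by
        rw [Real.sqrt_mul (by positivity), Real.sqrt_sq hb]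

set_option maxHeartbeats 1600000 in
/-- Deterministic reachability core of Proposition 1: under the componentwise control
`|α^k − c^k| ≤ C|c^k|` with `C > 2`, any target ball inside the open path-connected set `S`
can be reached from any starting center in finitely many steps. -/
theorem gs_reaches_any_ball
    (K : ℕ) (hK : 1 ≤ K)
    (S : Set (EuclideanSpace ℝ (Fin K))) (hSopen : IsOpen S)
    (hSconn : IsPathConnected S)
    (C : ℝ) (hC : 2 < C)
    (c₀ : EuclideanSpace ℝ (Fin K)) (hc₀ : c₀ ∈ S) (hc₀ne : ∀ k, c₀ k ≠ 0)
    (β : EuclideanSpace ℝ (Fin K)) (hβ : β ∈ S)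
    (η : ℝ) (hη : 0 < η) (hball : ball β η ⊆ S) :
    ∃ (m₀ : ℕ) (c : ℕ → EuclideanSpace ℝ (Fin K)),
      c 0 = c₀ ∧
      (∀ m ≤ m₀ + 1, c m ∈ S) ∧
      (∀ m ≤ m₀, ∀ k : Fin K, |c (m + 1) k - c m k| ≤ C * |c m k|) ∧
      c (m₀ + 1) ∈ ball β η := by
  classical
  obtain ⟨γ, hγS⟩ := hSconn.joinedIn c₀ hc₀ β hβ
  obtain ⟨f, hfdef⟩ : ∃ f : ℝ → EuclideanSpace ℝ (Fin K), f = γ.extend := ⟨_, rfl⟩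
  have hf0 : f 0 = c₀ := by rw [hfdef, Path.extend_zero]
  have hf1 : f 1 = β := by rw [hfdef, Path.extend_one]
  have hfS : ∀ u ∈ Set.Icc (0:ℝ) 1, f u ∈ S := by
    intro u hu
    rw [hfdef, Path.extend_apply γ hu]
    exact hγS _
  have hcomp : IsCompact (f '' Set.Icc (0:ℝ) 1) := by
    rw [hfdef]; exact isCompact_Icc.image γ.continuous_extend
  have himg : f '' Set.Icc 0 1 ⊆ S := by rintro _ ⟨u, hu, rfl⟩; exact hfS u hu
  obtain ⟨δ₀, hδ₀, hth⟩ := hcomp.exists_thickening_subset_open hSopen himg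
  obtain ⟨δ, hδdef⟩ : ∃ δ : ℝ, δ = min δ₀ η := ⟨_, rfl⟩
  have hδ : 0 < δ := hδdef ▸ lt_min hδ₀ hη
  have hδη : δ ≤ η := hδdef ▸ min_le_right _ _
  have hballf : ∀ u ∈ Set.Icc (0:ℝ) 1, ∀ x, dist x (f u) < δ → x ∈ S := by
    intro u hu x hx
    apply hth
    rw [Metric.mem_thickening_iff]
    exact ⟨f u, Set.mem_image_of_mem f hu, lt_of_lt_of_le hx (hδdef ▸ min_le_left _ _)⟩
  have hKpos : (0:ℝ) < Real.sqrt K := Real.sqrt_pos.2 (by exact_mod_cast hK)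
  obtain ⟨a, hadef⟩ : ∃ a : ℝ, a = δ / (2 * Real.sqrt K) := ⟨_, rfl⟩
  have hapos : 0 < a := by rw [hadef]; positivity
  have hsa : Real.sqrt K * a = δ / 2 := by
    rw [hadef]; field_simp
  obtain ⟨ε, hεdef⟩ : ∃ ε : ℝ, ε = (C - 2) * a := ⟨_, rfl⟩
  have hεpos : 0 < ε := hεdef ▸ mul_pos (by linarith) hapos
  -- uniform continuity of the extended path on [0,1]
  have hUC : UniformContinuousOn f (Set.Icc 0 1) := by
    rw [hfdef]
    exact isCompact_Icc.uniformContinuousOn_of_continuous γ.continuous_extend.continuousOn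
  rw [Metric.uniformContinuousOn_iff] at hUC
  obtain ⟨δt, hδt, hUC⟩ := hUC ε hεpos
  obtain ⟨n, hn⟩ := exists_nat_one_div_lt hδt
  obtain ⟨N, hNdef⟩ : ∃ N : ℕ, N = n + 1 := ⟨_, rfl⟩
  have hNpos : (0:ℝ) < N := by rw [hNdef]; positivity
  obtain ⟨t, htdef⟩ : ∃ t : ℕ → ℝ, t = fun i : ℕ => (i : ℝ) / (N : ℝ) := ⟨_, rfl⟩
  have htmem : ∀ i ≤ N, t i ∈ Set.Icc (0:ℝ) 1 := by
    intro i hi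
    simp only [htdef]
    constructor
    · positivity
    · rw [div_le_one hNpos]; exact_mod_cast hi
  have hfstep : ∀ i < N, dist (f (t (i + 1))) (f (t i)) < ε := by
    intro i hi
    refine hUC _ (htmem (i+1) hi) _ (htmem i hi.le) ?_
    have heq : dist (t (i+1)) (t i) = 1 / (N : ℝ) := by
      simp only [htdef, Real.dist_eq]
      push_cast
      rw [div_sub_div_same, show ((i:ℝ) + 1 - i) = 1 by ring, abs_of_nonneg (by positivity)]
    rw [heq, hNdef]
    exact_mod_cast hn
  -- number of growth steps
  have hJk : ∀ k : Fin K, ∃ J : ℕ, a ≤ 3 ^ J * |c₀ k| := by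
    intro k
    obtain ⟨J, hJ⟩ := pow_unbounded_of_one_lt (a / |c₀ k|) (by norm_num : (1:ℝ) < 3)
    refine ⟨J, ?_⟩
    have hpos : 0 < |c₀ k| := abs_pos.2 (hc₀ne k)
    rw [div_lt_iff₀ hpos] at hJ
    nlinarith
  choose Jf hJf using hJk
  obtain ⟨J, hJdef⟩ : ∃ J : ℕ, J = Finset.univ.sup Jf := ⟨_, rfl⟩
  have hJ : ∀ k, a ≤ 3 ^ J * |c₀ k| := by
    intro k
    refine le_trans (hJf k) (mul_le_mul_of_nonneg_right ?_ (abs_nonneg _))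
    refine pow_le_pow_right₀ (by norm_num) ?_
    rw [hJdef]
    exact Finset.le_sup (Finset.mem_univ k)
  -- the sequences
  obtain ⟨p, hpdef⟩ : ∃ p : ℕ → EuclideanSpace ℝ (Fin K), p = fun j => WithLp.toLp 2 fun k =>
    if a ≤ |c₀ k| then c₀ k else sg (c₀ k) * min a (3 ^ j * |c₀ k|) := ⟨_, rfl⟩
  obtain ⟨q, hqdef⟩ : ∃ q : ℕ → EuclideanSpace ℝ (Fin K), q = fun i => WithLp.toLp 2 fun k =>
    f (t i) k + a * sg (f (t i) k) := ⟨_, rfl⟩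
  obtain ⟨c, hcdef⟩ : ∃ c : ℕ → EuclideanSpace ℝ (Fin K), c = fun m =>
    if m ≤ J then p m else q (m - J) := ⟨_, rfl⟩
  -- basic coordinate facts
  have hp_close : ∀ j k, |p j k - c₀ k| ≤ a := by
    intro j k
    simp only [hpdef, PiLp.toLp_apply]
    split_ifs with h
    · simpa using hapos.le
    · push_neg at h
      have hx0 : 0 ≤ |c₀ k| := abs_nonneg _
      have hxm : |c₀ k| ≤ min a (3 ^ j * |c₀ k|) :=
        le_min h.le (le_mul_of_one_le_left hx0 (one_le_pow₀ (by norm_num)))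
      have heq : sg (c₀ k) * min a (3 ^ j * |c₀ k|) - c₀ k
          = sg (c₀ k) * (min a (3 ^ j * |c₀ k|) - |c₀ k|) := by
        rw [mul_sub, sg_mul_abs]
      rw [heq, abs_mul, abs_sg, one_mul, abs_of_nonneg (by linarith)]
      have := min_le_left a (3 ^ j * |c₀ k|)
      linarith
  have hq_close : ∀ i k, |q i k - f (t i) k| = a := by
    intro i k
    simp only [hqdef, PiLp.toLp_apply]
    rw [add_sub_cancel_left, abs_mul, abs_sg, mul_one, abs_of_nonneg hapos.le]
  have hq_big : ∀ i k, a ≤ |q i k| := by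
    intro i k
    simp only [hqdef, PiLp.toLp_apply]
    rw [abs_add_mul_sg _ _ hapos.le]
    have := abs_nonneg (f (t i) k); linarith
  have hpJ_big : ∀ k, a ≤ |p J k| := by
    intro k
    simp only [hpdef, PiLp.toLp_apply]
    split_ifs with h
    · exact h
    · rw [abs_mul, abs_sg, one_mul]
      rw [abs_of_nonneg (le_min hapos.le (by positivity : (0:ℝ) ≤ 3 ^ J * |c₀ k|))]
      exact le_min le_rfl (hJ k)
  have hft0 : f (t 0) = c₀ := by
    have h0 : t 0 = 0 := by rw [htdef]; simp
    rw [h0, hf0]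
  have hftN : f (t N) = β := by
    have h1 : t N = 1 := by rw [htdef]; field_simp
    rw [h1, hf1]
  -- membership
  have hpS : ∀ j, p j ∈ S := by
    intro j
    refine hballf 0 (by simp) _ ?_
    rw [hf0]
    calc dist (p j) c₀ ≤ Real.sqrt K * a := dist_le_of_coords _ _ a hapos.le (hp_close j)
      _ = δ / 2 := hsa
      _ < δ := by linarith
  have hqS : ∀ i ≤ N, q i ∈ S := by
    intro i hi
    refine hballf (t i) (htmem i hi) _ ?_
    calc dist (q i) (f (t i)) ≤ Real.sqrt K * a :=
          dist_le_of_coords _ _ a hapos.le (fun k => (hq_close i k).le)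
      _ = δ / 2 := hsa
      _ < δ := by linarith
  refine ⟨J + n, c, ?_, ?_, ?_, ?_⟩
  · -- c 0 = c₀
    simp only [hcdef, if_pos (Nat.zero_le J)]
    ext k
    simp only [hpdef, PiLp.toLp_apply]
    split_ifs with h
    · rfl
    · push_neg at h
      rw [pow_zero, one_mul, min_eq_right h.le, sg_mul_abs]
  · -- membership
    intro m hm
    simp only [hcdef]
    split_ifs with h
    · exact hpS m
    · refine hqS (m - J) ?_
      push_neg at h
      omega
  · -- the step bounds
    intro m hm k
    rcases lt_or_ge m J with hmJ | hmJ
    · -- growth phase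
      have h1 : c (m + 1) = p (m + 1) := by simp only [hcdef]; rw [if_pos (by omega)]
      have h2 : c m = p m := by simp only [hcdef]; rw [if_pos (by omega)]
      rw [h1, h2]
      simp only [hpdef, PiLp.toLp_apply]
      split_ifs with h
      · simpa using mul_nonneg (by linarith : (0:ℝ) ≤ C) (abs_nonneg _)
      · push_neg at h
        have hx0 : 0 ≤ |c₀ k| := abs_nonneg _
        have hmin0 : 0 ≤ min a (3 ^ m * |c₀ k|) := le_min hapos.le (by positivity)
        have hmono : min a (3 ^ m * |c₀ k|) ≤ min a (3 ^ (m + 1) * |c₀ k|) := by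
          refine min_le_min le_rfl ?_
          have h3 : (3:ℝ) ^ m ≤ 3 ^ (m + 1) := by
            apply pow_le_pow_right₀ (by norm_num); omega
          exact mul_le_mul_of_nonneg_right h3 hx0
        have hkey : min a (3 ^ (m + 1) * |c₀ k|) ≤ 3 * min a (3 ^ m * |c₀ k|) := by
          rcases le_total a (3 ^ m * |c₀ k|) with hc1 | hc1
          · rw [min_eq_left hc1]
            have := min_le_left a (3 ^ (m+1) * |c₀ k|)
            linarith
          · rw [min_eq_right hc1]
            have h3 : (3:ℝ) ^ (m + 1) * |c₀ k| = 3 * (3 ^ m * |c₀ k|) := by ring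
            rw [h3]
            exact min_le_right _ _
        have hdiff : sg (c₀ k) * min a (3 ^ (m+1) * |c₀ k|) - sg (c₀ k) * min a (3 ^ m * |c₀ k|)
            = sg (c₀ k) * (min a (3 ^ (m+1) * |c₀ k|) - min a (3 ^ m * |c₀ k|)) := by ring
        rw [hdiff, abs_mul, abs_sg, one_mul,
          abs_of_nonneg (by linarith), abs_mul, abs_sg, one_mul,
          abs_of_nonneg hmin0]
        have h2C : 2 * min a (3 ^ m * |c₀ k|) ≤ C * min a (3 ^ m * |c₀ k|) :=
          mul_le_mul_of_nonneg_right (by linarith) hmin0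
        linarith
    · -- travel phase
      have hiN : m - J < N := by omega
      have h1 : c (m + 1) = q (m - J + 1) := by
        simp only [hcdef]
        rw [if_neg (by omega), show m + 1 - J = m - J + 1 from by omega]
      have hsrc : a ≤ |c m k| ∧ |c m k - f (t (m - J)) k| ≤ a := by
        rcases eq_or_lt_of_le hmJ with hEq | hlt
        · have h2 : c m = p J := by
            simp only [hcdef]; rw [if_pos (by omega), ← hEq]
          have hi0 : m - J = 0 := by omega
          rw [h2, hi0, hft0]
          exact ⟨hpJ_big k, hp_close J k⟩
        · have h2 : c m = q (m - J) := by simp only [hcdef]; rw [if_neg (by omega)]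
          rw [h2]
          exact ⟨hq_big (m - J) k, (hq_close (m - J) k).le⟩
      obtain ⟨hsrc1, hsrc2⟩ := hsrc
      have hmid : |f (t (m - J + 1)) k - f (t (m - J)) k| < ε :=
        lt_of_le_of_lt (coord_le_dist _ _ k) (hfstep (m - J) hiN)
      have htri : |q (m - J + 1) k - c m k| ≤ a + ε + a := by
        have e1 := hq_close (m - J + 1) k
        calc |q (m - J + 1) k - c m k|
            = |(q (m - J + 1) k - f (t (m - J + 1)) k) + (f (t (m - J + 1)) k - f (t (m - J)) k)
                + (f (t (m - J)) k - c m k)| := by ring_nf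
          _ ≤ |q (m - J + 1) k - f (t (m - J + 1)) k| + |f (t (m - J + 1)) k - f (t (m - J)) k|
                + |f (t (m - J)) k - c m k| :=
              (abs_add_le _ _).trans (by gcongr; exact abs_add_le _ _)
          _ ≤ a + ε + a := by
              rw [abs_sub_comm (f (t (m - J)) k)]
              linarith [e1.le, hmid.le]
      rw [h1]
      have hCa : a + ε + a = C * a := by rw [hεdef]; ring
      calc |q (m - J + 1) k - c m k| ≤ a + ε + a := htri
        _ = C * a := hCa
        _ ≤ C * |c m k| := mul_le_mul_of_nonneg_left hsrc1 (by linarith)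
  · -- endpoint
    have h1 : c (J + n + 1) = q N := by
      simp only [hcdef]
      rw [if_neg (by omega), show J + n + 1 - J = N from by omega]
    rw [h1, Metric.mem_ball]
    calc dist (q N) β = dist (q N) (f (t N)) := by rw [hftN]
      _ ≤ Real.sqrt K * a := dist_le_of_coords _ _ a hapos.le (fun k => (hq_close N k).le)
      _ = δ / 2 := hsa
      _ < η := by linarith
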